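/- For all n ≥ 3 and k ≥ 1, the multigraph C_n^k is not DP-degree-colorable; that is, there exists a cover (L,H) of C_n^k with |L(v)| = 2k = deg(v) for every vertex v such that C_n^k is not (L,H)-colorable. -/

import Mathlib

open scoped Classical

/-- A multigraph on vertex type `V`: a symmetric edge-multiplicity function with no loops. -/
structure Multigraph (V : Type) where
  e : V → V → ℕ
  symm : ∀ u v, e u v = e v u
  loopless : ∀ v, e v v = 0

namespace Multigraph

variable {V : Type}

/-- `u` and `v` are adjacent if they are distinct and joined by at least one edge. -/
def Adj (G : Multigraph V) (u v : V) : Prop := u ≠ v ∧ 1 ≤ G.e u v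

/-- The underlying simple graph of a multigraph. -/
def toSimpleGraph (G : Multigraph V) : SimpleGraph V where
  Adj := G.Adj
  symm := ⟨fun u v h => ⟨Ne.symm h.1, by rw [G.symm]; exact h.2⟩⟩
  loopless := ⟨fun v h => h.1 rfl⟩

/-- The degree of a vertex: the sum of edge multiplicities at it. -/
def deg [Fintype V] (G : Multigraph V) (v : V) : ℕ := ∑ u, G.e v u

/-- The induced sub-multigraph on a set of vertices. -/
def induce (G : Multigraph V) (B : Set V) : Multigraph B where
  e u v := G.e u v
  symm u v := G.symm u v
  loopless v := G.loopless v

/-- A cover `(L, H)` of a multigraph `G`: pairwise disjoint lists `L v` of colors and a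
graph `H` on the union of the lists (given by its adjacency relation `HAdj`), such that each
`L v` spans a clique, every edge of `H` joins colors of a single list or colors of lists of
adjacent vertices, and each color of `L u` has at most `e_G(u,v)` neighbors in `L v`. -/
structure Cover (G : Multigraph V) (C : Type) where
  L : V → Finset C
  HAdj : C → C → Prop
  Hsymm : ∀ x y, HAdj x y → HAdj y x
  Hirrefl : ∀ x, ¬ HAdj x x
  disjoint : ∀ u v, u ≠ v → Disjoint (L u) (L v)
  cliques : ∀ v, ∀ x ∈ L v, ∀ y ∈ L v, x ≠ y → HAdj x y
  edges_within : ∀ x y, HAdj x y → ∃ u v, x ∈ L u ∧ y ∈ L v ∧ (u = v ∨ G.Adj u v)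
  matching : ∀ u v, u ≠ v → ∀ x ∈ L u, ((L v).filter fun y => HAdj x y).card ≤ G.e u v

/-- An `(L,H)`-coloring: an independent set of `H` meeting every list in exactly one color. -/
def Cover.IsColoring {G : Multigraph V} {C : Type} (cov : Cover G C) (I : Finset C) : Prop :=
  (∀ x ∈ I, ∃ v, x ∈ cov.L v) ∧
  (∀ x ∈ I, ∀ y ∈ I, ¬ cov.HAdj x y) ∧
  (∀ v, (I ∩ cov.L v).card = 1)

/-- `G` is `(L,H)`-colorable if an `(L,H)`-coloring exists. -/
def Cover.Colorable {G : Multigraph V} {C : Type} (cov : Cover G C) : Prop :=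
  ∃ I, cov.IsColoring I

/-- `G` is DP-degree-colorable if it is `(L,H)`-colorable whenever `|L v| ≥ deg v` for all `v`. -/
def DPDegreeColorable [Fintype V] (G : Multigraph V) : Prop :=
  ∀ (C : Type) (cov : Cover G C), (∀ v, G.deg v ≤ (cov.L v).card) → cov.Colorable

/-- The DP-chromatic number: the least `k` such that `G` is `(L,H)`-colorable for every cover
with all lists of size at least `k`. -/
noncomputable def DPChromatic [Fintype V] (G : Multigraph V) : ℕ :=
  sInf {k | ∀ (C : Type) (cov : Cover G C), (∀ v, k ≤ (cov.L v).card) → cov.Colorable}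

/-- The sub-multigraph of `G` on vertex set `A` with multiplicities `e' ≤ e_G`. -/
def subMG (G : Multigraph V) (A : Finset V) (e' : V → V → ℕ)
    (hsymm : ∀ u v, e' u v = e' v u) (hle : ∀ u v, e' u v ≤ G.e u v) :
    Multigraph {x // x ∈ A} where
  e u v := e' u v
  symm u v := hsymm u v
  loopless v := Nat.le_zero.mp (le_of_le_of_eq (hle v v) (G.loopless v))

/-- `G` is DP-`k`-critical: `χ_DP(G) = k` and every proper sub-multigraph (obtained by deleting
vertices and/or decreasing edge multiplicities) has smaller DP-chromatic number. -/
def DPCritical [Fintype V] (G : Multigraph V) (k : ℕ) : Prop :=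
  DPChromatic G = k ∧
  ∀ (A : Finset V) (e' : V → V → ℕ) (hsymm : ∀ u v, e' u v = e' v u)
    (hle : ∀ u v, e' u v ≤ G.e u v),
    (∀ u v, e' u v ≠ 0 → u ∈ A ∧ v ∈ A) →
    ¬(A = Finset.univ ∧ e' = G.e) →
    DPChromatic (subMG G A e' hsymm hle) < k

/-- `G[B]` is connected and has no cut vertex. -/
def Nonseparable (G : Multigraph V) (B : Set V) : Prop :=
  B.Nonempty ∧ (G.induce B).toSimpleGraph.Connected ∧
    ∀ v ∈ B, (G.induce (B \ {v})).toSimpleGraph.Preconnected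

/-- A block of `G`: a maximal vertex set inducing a connected sub-multigraph with no cut vertex. -/
def IsBlock (G : Multigraph V) (B : Set V) : Prop :=
  Nonseparable G B ∧ ∀ B', B ⊆ B' → Nonseparable G B' → B' = B

/-- `G` is 2-connected: connected, at least two vertices, and deleting any one vertex leaves
it connected. -/
def TwoConnected [Fintype V] (G : Multigraph V) : Prop :=
  G.toSimpleGraph.Connected ∧ 2 ≤ Fintype.card V ∧
    ∀ v : V, (G.induce ({v}ᶜ : Set V)).toSimpleGraph.Connected

end Multigraph

/-- A simple graph is a cycle iff it is connected and every vertex has exactly two neighbors. -/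
def IsCycleGraph {α : Type} (S : SimpleGraph α) : Prop :=
  S.Connected ∧ ∀ v, {u | S.Adj v u}.ncard = 2

/-- The multigraph `K_n^k`: `n` vertices, every two distinct vertices joined by `k` edges. -/
def KMG (n k : ℕ) : Multigraph (Fin n) where
  e u v := if u = v then 0 else k
  symm u v := by by_cases h : u = v <;> simp [h, eq_comm]
  loopless v := by simp

/-- The multigraph `C_n^k`: the `n`-cycle with every edge of multiplicity `k`. -/
def CMG (n k : ℕ) : Multigraph (Fin n) where
  e u v := if u ≠ v ∧ ((u.val + 1) % n = v.val ∨ (v.val + 1) % n = u.val) then k else 0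
  symm u v := by
    apply if_congr _ rfl rfl
    constructor
    · rintro ⟨h1, h2⟩; exact ⟨h1.symm, h2.symm⟩
    · rintro ⟨h1, h2⟩; exact ⟨h1.symm, h2.symm⟩
  loopless v := by simp

section Statement2Aux

open Multigraph

lemma modA {n : ℕ} (hn : 3 ≤ n) {a b : ℕ} (ha : a < n) (hb : b < n) :
    (a + 1) % n = b ↔ (b = a + 1 ∨ (a = n - 1 ∧ b = 0)) := by
  rcases Nat.lt_or_ge (a + 1) n with h | h
  · rw [Nat.mod_eq_of_lt h]; omega
  · have he : a + 1 = n := by omega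
    rw [he, Nat.mod_self]; omega

/-- The "shift" condition along an edge of the cycle. -/
def scond (n : ℕ) (a : ℕ) (s s' : Fin 2) : Prop :=
  if a = n - 1 then (s.val + s'.val + n) % 2 = 1 else s = s'

lemma scond_right {n a : ℕ} {s t1 t2 : Fin 2} (h1 : scond n a s t1) (h2 : scond n a s t2) :
    t1 = t2 := by
  unfold scond at h1 h2
  by_cases h : a = n - 1
  · rw [if_pos h] at h1 h2
    have := t1.isLt; have := t2.isLt; have := s.isLt
    exact Fin.ext (by omega)
  · rw [if_neg h] at h1 h2
    exact h1.symm.trans h2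

lemma scond_left {n a : ℕ} {s t1 t2 : Fin 2} (h1 : scond n a t1 s) (h2 : scond n a t2 s) :
    t1 = t2 := by
  unfold scond at h1 h2
  by_cases h : a = n - 1
  · rw [if_pos h] at h1 h2
    have := t1.isLt; have := t2.isLt; have := s.isLt
    exact Fin.ext (by omega)
  · rw [if_neg h] at h1 h2
    exact h1.trans h2.symm

/-- The bad cover's adjacency. -/
def badAdj (n k : ℕ) (x y : Fin n × Fin 2 × Fin k) : Prop :=
  (x.1 = y.1 ∧ x ≠ y) ∨
  ((x.1.val + 1) % n = y.1.val ∧ scond n x.1.val x.2.1 y.2.1) ∨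
  ((y.1.val + 1) % n = x.1.val ∧ scond n y.1.val y.2.1 x.2.1)

def badL (n k : ℕ) (v : Fin n) : Finset (Fin n × Fin 2 × Fin k) :=
  ({v} : Finset (Fin n)) ×ˢ (Finset.univ : Finset (Fin 2 × Fin k))

lemma mem_badL {n k : ℕ} {v : Fin n} {x : Fin n × Fin 2 × Fin k} :
    x ∈ badL n k v ↔ x.1 = v := by
  obtain ⟨x1, x2⟩ := x
  simp [badL, Finset.mem_product, eq_comm]

lemma next_ne {n : ℕ} (hn : 3 ≤ n) {u v : Fin n} (h1 : (u.val + 1) % n = v.val) : u ≠ v := by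
  rw [modA hn u.isLt v.isLt] at h1
  intro h; subst h; omega

lemma no_both {n : ℕ} (hn : 3 ≤ n) {u v : Fin n} (h1 : (u.val + 1) % n = v.val)
    (h2 : (v.val + 1) % n = u.val) : False := by
  rw [modA hn u.isLt v.isLt] at h1
  rw [modA hn v.isLt u.isLt] at h2
  omega

lemma e_next {n k : ℕ} (hn : 3 ≤ n) {u v : Fin n} (h : (u.val + 1) % n = v.val) :
    (CMG n k).e u v = k := by
  show (if _ then k else 0) = k
  rw [if_pos ⟨next_ne hn h, Or.inl h⟩]

lemma e_prev {n k : ℕ} (hn : 3 ≤ n) {u v : Fin n} (h : (v.val + 1) % n = u.val) :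
    (CMG n k).e u v = k := by
  show (if _ then k else 0) = k
  rw [if_pos ⟨(next_ne hn h).symm, Or.inr h⟩]

lemma e_none {n k : ℕ} {u v : Fin n} (h1 : (u.val + 1) % n ≠ v.val)
    (h2 : (v.val + 1) % n ≠ u.val) : (CMG n k).e u v = 0 := by
  show (if _ then k else 0) = 0
  rw [if_neg]
  rintro ⟨-, h | h⟩
  · exact h1 h
  · exact h2 h

lemma deg_CMG {n : ℕ} (k : ℕ) (hn : 3 ≤ n) (v : Fin n) : (CMG n k).deg v = 2 * k := by
  have hn0 : 0 < n := by omega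
  have hA : ((v.val + 1) % n = v.val + 1 ∧ v.val + 1 < n) ∨
      ((v.val + 1) % n = 0 ∧ v.val = n - 1) := by
    rcases Nat.lt_or_ge (v.val + 1) n with h | h
    · exact Or.inl ⟨Nat.mod_eq_of_lt h, h⟩
    · have he : v.val + 1 = n := by have := v.isLt; omega
      exact Or.inr ⟨by rw [he, Nat.mod_self], by omega⟩
  have hB : ((v.val + (n - 1)) % n = v.val - 1 ∧ 1 ≤ v.val) ∨
      ((v.val + (n - 1)) % n = n - 1 ∧ v.val = 0) := by
    rcases Nat.eq_zero_or_pos v.val with h | h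
    · exact Or.inr ⟨by rw [h, Nat.zero_add, Nat.mod_eq_of_lt (by omega)], h⟩
    · refine Or.inl ⟨?_, h⟩
      rw [show v.val + (n - 1) = (v.val - 1) + n by omega, Nat.add_mod_right,
        Nat.mod_eq_of_lt (by have := v.isLt; omega)]
  have hset : (Finset.univ.filter (fun u : Fin n =>
      v ≠ u ∧ ((v.val + 1) % n = u.val ∨ (u.val + 1) % n = v.val))) =
      {⟨(v.val + 1) % n, Nat.mod_lt _ hn0⟩, ⟨(v.val + (n - 1)) % n, Nat.mod_lt _ hn0⟩} := by
    ext u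
    simp only [Finset.mem_filter, Finset.mem_univ, true_and, Finset.mem_insert,
      Finset.mem_singleton, Fin.ext_iff, ne_eq]
    rw [modA hn u.isLt v.isLt]
    have := u.isLt; have := v.isLt
    omega
  have hcard : ({⟨(v.val + 1) % n, Nat.mod_lt _ hn0⟩,
      ⟨(v.val + (n - 1)) % n, Nat.mod_lt _ hn0⟩} : Finset (Fin n)).card = 2 := by
    rw [Finset.card_insert_of_notMem, Finset.card_singleton]
    simp only [Finset.mem_singleton, Fin.ext_iff]
    omega
  have he : ∀ u, (CMG n k).e v u =
      if v ≠ u ∧ ((v.val + 1) % n = u.val ∨ (u.val + 1) % n = v.val) then k else 0 :=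
    fun u => rfl
  unfold Multigraph.deg
  simp only [he]
  rw [← Finset.sum_filter, hset, Finset.sum_const, hcard, smul_eq_mul]

/-- The bad cover of `C_n^k`. -/
def badCover (n k : ℕ) (hn : 3 ≤ n) (hk : 1 ≤ k) :
    Cover (CMG n k) (Fin n × Fin 2 × Fin k) where
  L := badL n k
  HAdj := badAdj n k
  Hsymm x y h := by
    rcases h with ⟨h1, h2⟩ | ⟨h1, h2⟩ | ⟨h1, h2⟩
    · exact Or.inl ⟨h1.symm, h2.symm⟩
    · exact Or.inr (Or.inr ⟨h1, h2⟩)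
    · exact Or.inr (Or.inl ⟨h1, h2⟩)
  Hirrefl x h := by
    rcases h with ⟨-, h2⟩ | ⟨h1, -⟩ | ⟨h1, -⟩
    · exact h2 rfl
    · exact next_ne hn h1 rfl
    · exact next_ne hn h1 rfl
  disjoint u v huv := by
    rw [Finset.disjoint_left]
    intro x hx hx'
    exact huv ((mem_badL.mp hx).symm.trans (mem_badL.mp hx'))
  cliques v x hx y hy hxy := Or.inl ⟨(mem_badL.mp hx).trans (mem_badL.mp hy).symm, hxy⟩
  edges_within x y h := by
    refine ⟨x.1, y.1, mem_badL.mpr rfl, mem_badL.mpr rfl, ?_⟩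
    rcases h with ⟨h1, -⟩ | ⟨h1, -⟩ | ⟨h1, -⟩
    · exact Or.inl h1
    · exact Or.inr ⟨next_ne hn h1, by rw [e_next hn h1]; exact hk⟩
    · exact Or.inr ⟨(next_ne hn h1).symm, by rw [e_prev hn h1]; exact hk⟩
  matching u v huv x hx := by
    have hxu : x.1 = u := mem_badL.mp hx
    by_cases h1 : (u.val + 1) % n = v.val
    · rw [e_next hn h1]
      have hsub : ∀ y ∈ (badL n k v).filter (fun y => badAdj n k x y),
          y.1 = v ∧ scond n u.val x.2.1 y.2.1 := by
        intro y hy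
        rw [Finset.mem_filter] at hy
        have hyv : y.1 = v := mem_badL.mp hy.1
        refine ⟨hyv, ?_⟩
        rcases hy.2 with ⟨ha, -⟩ | ⟨-, hs⟩ | ⟨ha, -⟩
        · exact absurd (hxu ▸ hyv ▸ ha) huv
        · rwa [hxu] at hs
        · rw [hyv, hxu] at ha
          exact absurd (no_both hn h1 ha) not_false
      have : ((badL n k v).filter (fun y => badAdj n k x y)).card ≤
          (Finset.univ : Finset (Fin k)).card := by
        apply Finset.card_le_card_of_injOn (fun y => y.2.2)
          (fun y _ => Finset.mem_univ _)
        intro y1 hy1 y2 hy2 hf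
        obtain ⟨hv1, hs1⟩ := hsub y1 (Finset.mem_coe.mp hy1)
        obtain ⟨hv2, hs2⟩ := hsub y2 (Finset.mem_coe.mp hy2)
        have h21 : y1.2.1 = y2.2.1 := scond_right hs1 hs2
        exact Prod.ext (hv1.trans hv2.symm) (Prod.ext h21 hf)
      simpa using this
    · by_cases h2 : (v.val + 1) % n = u.val
      · rw [e_prev hn h2]
        have hsub : ∀ y ∈ (badL n k v).filter (fun y => badAdj n k x y),
            y.1 = v ∧ scond n v.val y.2.1 x.2.1 := by
          intro y hy
          rw [Finset.mem_filter] at hy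
          have hyv : y.1 = v := mem_badL.mp hy.1
          refine ⟨hyv, ?_⟩
          rcases hy.2 with ⟨ha, -⟩ | ⟨ha, -⟩ | ⟨-, hs⟩
          · exact absurd (hxu ▸ hyv ▸ ha) huv
          · rw [hyv, hxu] at ha
            exact absurd ha h1
          · rwa [hyv] at hs
        have : ((badL n k v).filter (fun y => badAdj n k x y)).card ≤
            (Finset.univ : Finset (Fin k)).card := by
          apply Finset.card_le_card_of_injOn (fun y => y.2.2)
            (fun y _ => Finset.mem_univ _)
          intro y1 hy1 y2 hy2 hf
          obtain ⟨hv1, hs1⟩ := hsub y1 (Finset.mem_coe.mp hy1)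
          obtain ⟨hv2, hs2⟩ := hsub y2 (Finset.mem_coe.mp hy2)
          have h21 : y1.2.1 = y2.2.1 := scond_left hs1 hs2
          exact Prod.ext (hv1.trans hv2.symm) (Prod.ext h21 hf)
        simpa using this
      · rw [e_none h1 h2]
        refine Nat.le_zero.mpr (Finset.card_eq_zero.mpr (Finset.filter_eq_empty_iff.mpr ?_))
        intro y hy hadj
        have hyv : y.1 = v := mem_badL.mp hy
        rcases hadj with ⟨ha, -⟩ | ⟨ha, -⟩ | ⟨ha, -⟩
        · exact huv (hxu ▸ hyv ▸ ha)
        · rw [hyv, hxu] at ha; exact h1 ha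
        · rw [hyv, hxu] at ha; exact h2 ha

end Statement2Aux

open Multigraph in
/-- **Lemma 2.** For `n ≥ 3`, `k ≥ 1`, the multigraph `C_n^k` is not DP-degree-colorable: there
is a cover `(L,H)` with `|L v| = 2k = deg v` for every vertex `v` admitting no coloring. -/
theorem statement2 (n k : ℕ) (hn : 3 ≤ n) (hk : 1 ≤ k) :
    ¬ DPDegreeColorable (CMG n k) ∧
    ∃ (C : Type) (cov : Cover (CMG n k) C),
      (∀ v, (cov.L v).card = 2 * k ∧ (cov.L v).card = (CMG n k).deg v) ∧
      ¬ cov.Colorable := by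
  have hcard : ∀ v, ((badCover n k hn hk).L v).card = 2 * k := by
    intro v
    show (badL n k v).card = 2 * k
    rw [badL, Finset.card_product, Finset.card_singleton, one_mul, Finset.card_univ]
    simp [Fintype.card_prod]
  have hncol : ¬ (badCover n k hn hk).Colorable := by
    rintro ⟨I, hmemI, hind, hcI⟩
    choose c hc using fun v => Finset.card_eq_one.mp (hcI v)
    have hcmem : ∀ v, c v ∈ I ∧ (c v).1 = v := by
      intro v
      have h : c v ∈ ({c v} : Finset (Fin n × Fin 2 × Fin k)) :=
        Finset.mem_singleton_self _
      rw [← hc v] at h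
      have h' := (@Finset.mem_inter _ (fun a b => Classical.propDecidable (a = b)) _ _ _).mp h
      exact ⟨h'.1, mem_badL.mp h'.2⟩
    have hnadj : ∀ u v : Fin n, ¬ badAdj n k (c u) (c v) :=
      fun u v => hind _ (hcmem u).1 _ (hcmem v).1
    have key : ∀ i, ∀ hi : i < n,
        ((c ⟨i, hi⟩).2.1).val % 2 = (((c ⟨0, by omega⟩).2.1).val + i) % 2 := by
      intro i
      induction i with
      | zero => intro hi; rfl
      | succ j ih =>
        intro hi
        have hj : j < n := by omega
        have hA := hnadj ⟨j, hj⟩ ⟨j + 1, hi⟩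
        have hc1 : (c ⟨j, hj⟩).1 = ⟨j, hj⟩ := (hcmem _).2
        have hc2 : (c ⟨j + 1, hi⟩).1 = ⟨j + 1, hi⟩ := (hcmem _).2
        have hs : ¬ scond n j ((c ⟨j, hj⟩).2.1) ((c ⟨j + 1, hi⟩).2.1) := by
          intro hs
          apply hA
          refine Or.inr (Or.inl ?_)
          rw [hc1, hc2]
          exact ⟨Nat.mod_eq_of_lt hi, hs⟩
        have hne : ((c ⟨j, hj⟩).2.1).val ≠ ((c ⟨j + 1, hi⟩).2.1).val := by
          intro h
          apply hs
          unfold scond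
          rw [if_neg (by omega : ¬ j = n - 1)]
          exact Fin.ext h
        have h1 := ih hj
        have := ((c ⟨j, hj⟩).2.1).isLt
        have := ((c ⟨j + 1, hi⟩).2.1).isLt
        omega
    have hN : n - 1 < n := by omega
    have h0 : (0 : ℕ) < n := by omega
    have hA := hnadj ⟨n - 1, hN⟩ ⟨0, h0⟩
    have hc1 : (c ⟨n - 1, hN⟩).1 = ⟨n - 1, hN⟩ := (hcmem _).2
    have hc2 : (c ⟨0, h0⟩).1 = ⟨0, h0⟩ := (hcmem _).2
    have hs : ¬ scond n (n - 1) ((c ⟨n - 1, hN⟩).2.1) ((c ⟨0, h0⟩).2.1) := by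
      intro hs
      apply hA
      refine Or.inr (Or.inl ?_)
      rw [hc1, hc2]
      refine ⟨?_, hs⟩
      show (n - 1 + 1) % n = 0
      rw [show n - 1 + 1 = n by omega, Nat.mod_self]
    unfold scond at hs
    rw [if_pos rfl] at hs
    have hkey := key (n - 1) hN
    have := ((c ⟨n - 1, hN⟩).2.1).isLt
    have := ((c ⟨0, h0⟩).2.1).isLt
    omega
  constructor
  · intro hDP
    exact hncol (hDP _ (badCover n k hn hk)
      (fun v => by rw [deg_CMG k hn v, hcard v]))
  · exact ⟨_, badCover n k hn hk,
      fun v => ⟨hcard v, by rw [hcard v, deg_CMG k hn v]⟩, hncol⟩
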